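/- Let Y be integrable, E ∈ {0,1} an enrollment indicator, and M, N positive-integer-valued random variables with M ≤ N and P(E=1 | σ(M,N)) = M/N a.s. (uniform sampling). Define δ as the σ(M,N)-measurable random variable δ = E[Y·E|M,N]/P(E=1|M,N) − E[Y(1−E)|M,N]/P(E=0|M,N) on {M<N} and δ = 0 on {M=N}. Then E[ E[Y·E|M,N]/P(E=1|M,N) ] − E[Y] = E[ ((N−M)/N) · δ ]. -/

import Mathlib

open MeasureTheory ProbabilityTheory

/-- Selection-bias decomposition under uniform within-cluster sampling: the
bias of the enrolled-participants mean `E[E[Y|E=1,M,N]]` for the population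
mean `E[Y]` equals the expected product of the non-participation fraction
`(N-M)/N` and the participant/non-participant mean difference `δ`. -/
theorem stmt_15 {Ω : Type*} [mΩ : MeasurableSpace Ω]
    (μ : Measure Ω) [IsProbabilityMeasure μ]
    (Y : Ω → ℝ) (hYmeas : Measurable Y) (hYint : Integrable Y μ)
    (E : Ω → ℝ) (hEmeas : Measurable E) (hE01 : ∀ ω, E ω = 0 ∨ E ω = 1)
    (M N : Ω → ℕ) (hMmeas : Measurable M) (hNmeas : Measurable N)
    (hMN : ∀ ω, 1 ≤ M ω ∧ M ω ≤ N ω)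
    (mMN : MeasurableSpace Ω)
    (hmMN : mMN = MeasurableSpace.comap (fun ω => (M ω, N ω)) ⊤)
    (hle : mMN ≤ mΩ)
    (huniform : (μ[E|mMN]) =ᵐ[μ] fun ω => (M ω : ℝ) / (N ω : ℝ))
    (hYEint : Integrable (fun ω => Y ω * E ω) μ)
    (δ : Ω → ℝ)
    (hδ : δ = fun ω => if M ω < N ω then
        (μ[fun ω' => Y ω' * E ω'|mMN]) ω / ((M ω : ℝ) / (N ω : ℝ)) -
          (μ[fun ω' => Y ω' * (1 - E ω')|mMN]) ω / (1 - (M ω : ℝ) / (N ω : ℝ))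
      else 0)
    (hint1 : Integrable
      (fun ω => (μ[fun ω' => Y ω' * E ω'|mMN]) ω / ((M ω : ℝ) / (N ω : ℝ))) μ)
    (hint2 : Integrable
      (fun ω => (((N ω : ℝ) - (M ω : ℝ)) / (N ω : ℝ)) * δ ω) μ) :
    ∫ ω, (μ[fun ω' => Y ω' * E ω'|mMN]) ω / ((M ω : ℝ) / (N ω : ℝ)) ∂μ
        - ∫ ω, Y ω ∂μ
      = ∫ ω, (((N ω : ℝ) - (M ω : ℝ)) / (N ω : ℝ)) * δ ω ∂μ := by
  haveI : Fact (mMN ≤ mΩ) := ⟨hle⟩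
  letI : MeasurableSpace Ω := mΩ
  set A := μ[fun ω' => Y ω' * E ω'|mMN] with hA
  set B := μ[fun ω' => Y ω' * (1 - E ω')|mMN] with hB
  have hNpos : ∀ ω, 0 < (N ω : ℝ) := fun ω => by
    exact_mod_cast Nat.lt_of_lt_of_le Nat.zero_lt_one ((hMN ω).1.trans (hMN ω).2)
  have hMpos : ∀ ω, 0 < (M ω : ℝ) := fun ω => by
    exact_mod_cast Nat.lt_of_lt_of_le Nat.zero_lt_one (hMN ω).1
  have hY1Eint : Integrable (fun ω => Y ω * (1 - E ω)) μ := by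
    have h : (fun ω => Y ω * (1 - E ω)) = fun ω => Y ω - Y ω * E ω := by
      funext ω; ring
    rw [h]; exact hYint.sub hYEint
  have hEint : Integrable E μ := by
    refine Integrable.mono' (integrable_const (1 : ℝ)) hEmeas.aestronglyMeasurable
      (ae_of_all _ fun ω => ?_)
    rcases hE01 ω with h | h <;> simp [h]
  -- the set where M = N, measurable w.r.t. mMN
  set S : Set Ω := {ω | M ω = N ω} with hS
  have hSm : MeasurableSet[mMN] S := by
    rw [hmMN]
    exact ⟨{p : ℕ × ℕ | p.1 = p.2}, trivial, rfl⟩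
  have hSm0 : MeasurableSet[mΩ] S := hle _ hSm
  have hSm0' : MeasurableSet S := hSm0
  -- conditional expectation of 1 - E
  have hcond1E : (μ[fun ω => 1 - E ω|mMN]) =ᵐ[μ]
      fun ω => 1 - (M ω : ℝ) / (N ω : ℝ) := by
    refine ((condExp_sub (μ := μ) (m := mMN) (integrable_const (1 : ℝ)) hEint)).trans ?_
    filter_upwards [huniform] with ω hu
    simp [condExp_const hle (1 : ℝ), hu]
  -- ∫_S (1-E) = 0
  have hint1E : Integrable (fun ω => 1 - E ω) μ := (integrable_const 1).sub hEint
  have hSint : ∫ ω in S, (1 - E ω) ∂μ = 0 := by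
    have h1 : ∫ ω in S, (1 - E ω) ∂μ
        = ∫ ω in S, (1 - (M ω : ℝ) / (N ω : ℝ)) ∂μ := by
      rw [← setIntegral_condExp hle hint1E hSm]
      exact setIntegral_congr_ae hSm0 (hcond1E.mono fun ω h _ => h)
    rw [h1]
    refine setIntegral_eq_zero_of_forall_eq_zero fun ω hω => ?_
    have hω' : M ω = N ω := hω
    rw [hω', div_self (hNpos ω).ne']
    ring
  -- 1 - E = 0 a.e. on S
  have h1E0 : ∀ᵐ ω ∂(μ.restrict S), 1 - E ω = 0 := by
    have hnn : 0 ≤ᵐ[μ.restrict S] fun ω => 1 - E ω :=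
      ae_of_all _ fun ω => by rcases hE01 ω with h | h <;> simp [h]
    have := (integral_eq_zero_iff_of_nonneg_ae hnn (hint1E.restrict)).mp hSint
    exact this
  have h1E0' : ∀ᵐ ω ∂μ, ω ∈ S → 1 - E ω = 0 := (ae_restrict_iff' hSm0).mp h1E0
  -- indicator of Y(1-E) on S is a.e. zero
  have hg0 : S.indicator (fun ω => Y ω * (1 - E ω)) =ᵐ[μ] 0 := by
    filter_upwards [h1E0'] with ω hω
    by_cases hωS : ω ∈ S
    · simp [Set.indicator_of_mem hωS, hω hωS]
    · simp [Set.indicator_of_notMem hωS]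
  -- hence B = 0 a.e. on S
  have hBzero : ∀ᵐ ω ∂μ, ω ∈ S → B ω = 0 := by
    have h1 : S.indicator B =ᵐ[μ] 0 := by
      have h2 := (condExp_indicator (m := mMN) hY1Eint hSm).symm
      refine h2.trans ?_
      have h3 := condExp_congr_ae (m := mMN) (μ := μ) hg0
      refine h3.trans ?_
      simp [condExp_zero]
    filter_upwards [h1] with ω hω hωS
    rw [← Set.indicator_of_mem hωS B, hω]
    rfl
  -- additivity of conditional expectation
  have hadd : (μ[Y|mMN]) =ᵐ[μ] fun ω => A ω + B ω := by
    have hYeq : Y = fun ω => Y ω * E ω + Y ω * (1 - E ω) := by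
      funext ω; ring
    calc (μ[Y|mMN]) = μ[fun ω => Y ω * E ω + Y ω * (1 - E ω)|mMN] := by rw [← hYeq]
      _ =ᵐ[μ] fun ω => A ω + B ω := condExp_add hYEint hY1Eint mMN
  -- key pointwise a.e. identity
  have hkey : (fun ω => A ω / ((M ω : ℝ) / (N ω : ℝ)) - (μ[Y|mMN]) ω) =ᵐ[μ]
      fun ω => (((N ω : ℝ) - (M ω : ℝ)) / (N ω : ℝ)) * δ ω := by
    filter_upwards [hadd, hBzero] with ω haddω hBω
    rw [haddω, hδ]
    simp only
    rcases lt_or_eq_of_le (hMN ω).2 with hlt | heq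
    · rw [if_pos hlt]
      have hm := (hMpos ω).ne'
      have hn := (hNpos ω).ne'
      have hnm : (N ω : ℝ) - (M ω : ℝ) ≠ 0 := by
        have : (M ω : ℝ) < (N ω : ℝ) := by exact_mod_cast hlt
        exact sub_ne_zero.mpr this.ne'
      have h1 : 1 - (M ω : ℝ) / (N ω : ℝ) = ((N ω : ℝ) - (M ω : ℝ)) / (N ω : ℝ) := by
        field_simp
      rw [h1]
      field_simp
      ring
    · rw [if_neg (by omega : ¬ M ω < N ω)]
      have hBω0 : B ω = 0 := hBω heq
      rw [hBω0, heq, div_self (hNpos ω).ne']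
      simp
  -- conclude
  rw [integral_congr_ae hkey.symm, integral_sub hint1 (integrable_condExp),
    integral_condExp hle]
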